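/- arXiv:2412.00358 — 11 statements merged into one kernel-verified Lean document; each statement's English description precedes it below -/
import Mathlib

section
/- Every budget-additive valuation function is restricted MMS-feasible: if v(S) = min(Σ_{g∈S} v(g), B) for some budget B > 0 and nonnegative item values, then for any bundle S, any k, and any two partitions (X_1,...,X_k) and (Z_1,...,Z_k) of S, max_ℓ v(X_ℓ) ≥ min_j v(Z_j). -/
open Finset

/-- `X` is a partition of the bundle `S` into `k` bundles (bundles may be empty). -/
def IsPartitionOn {G : Type*} [DecidableEq G] {k : ℕ} (S : Finset G)
    (X : Fin k → Finset G) : Prop :=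
  (∀ i j : Fin k, i ≠ j → Disjoint (X i) (X j)) ∧ Finset.univ.biUnion X = S

theorem budget_additive_is_restricted_MMS_feasible
    {G : Type*} [DecidableEq G] (w : G → ℝ) (hw : ∀ g, 0 ≤ w g)
    (B : ℝ) (hB : 0 < B)
    (v : Finset G → ℝ) (hv : ∀ S : Finset G, v S = min (∑ g ∈ S, w g) B)
    (S : Finset G) (k : ℕ) (hk : 0 < k)
    (X Z : Fin k → Finset G)
    (hX : IsPartitionOn S X) (hZ : IsPartitionOn S Z) :
    Finset.univ.inf' ⟨⟨0, hk⟩, mem_univ _⟩ (fun ℓ => v (Z ℓ)) ≤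
      Finset.univ.sup' ⟨⟨0, hk⟩, mem_univ _⟩ (fun ℓ => v (X ℓ)) := by
  set f : Fin k → ℝ := fun ℓ => ∑ g ∈ X ℓ, w g with hf
  set gg : Fin k → ℝ := fun ℓ => ∑ g ∈ Z ℓ, w g with hgg
  have hne : (Finset.univ : Finset (Fin k)).Nonempty := ⟨⟨0, hk⟩, mem_univ _⟩
  have hsumX : ∑ ℓ, f ℓ = ∑ g ∈ S, w g := by
    rw [← hX.2, Finset.sum_biUnion]
    intro i _ j _ hij
    exact hX.1 i j hij
  have hsumZ : ∑ ℓ, gg ℓ = ∑ g ∈ S, w g := by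
    rw [← hZ.2, Finset.sum_biUnion]
    intro i _ j _ hij
    exact hZ.1 i j hij
  obtain ⟨ℓ₀, _, hℓ₀⟩ := Finset.exists_max_image Finset.univ f hne
  obtain ⟨j₀, _, hj₀⟩ := Finset.exists_min_image Finset.univ gg hne
  have h1 : (Finset.univ.card : ℕ) • gg j₀ ≤ ∑ ℓ, gg ℓ :=
    Finset.card_nsmul_le_sum _ _ _ (fun i _ => hj₀ i (mem_univ _))
  have h2 : ∑ ℓ, f ℓ ≤ (Finset.univ.card : ℕ) • f ℓ₀ :=
    Finset.sum_le_card_nsmul _ _ _ (fun i _ => hℓ₀ i (mem_univ _))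
  have hcard : (Finset.univ : Finset (Fin k)).card = k := by simp
  have hkey : gg j₀ ≤ f ℓ₀ := by
    have : (k : ℝ) * gg j₀ ≤ (k : ℝ) * f ℓ₀ := by
      rw [hcard] at h1 h2
      rw [hsumZ, ← hsumX] at h1
      simpa [nsmul_eq_mul] using h1.trans h2
    exact le_of_mul_le_mul_left this (by exact_mod_cast hk)
  calc Finset.univ.inf' ⟨⟨0, hk⟩, mem_univ _⟩ (fun ℓ => v (Z ℓ)) ≤ v (Z j₀) :=
        Finset.inf'_le (fun ℓ => v (Z ℓ)) (mem_univ j₀)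
    _ ≤ v (X ℓ₀) := by
        rw [hv, hv]
        exact min_le_min hkey le_rfl
    _ ≤ Finset.univ.sup' ⟨⟨0, hk⟩, mem_univ _⟩ (fun ℓ => v (X ℓ)) :=
        Finset.le_sup' (fun ℓ => v (X ℓ)) (mem_univ ℓ₀)
end

section
/- Every good-cancelable valuation function is restricted MMS-feasible: if v satisfies the cancelation property (v(Q) ≥ v(R) and v(S) > v(T) with Q∩S = R∩T = ∅ imply v(Q∪S) > v(R∪T)), then for any bundle S, any k, and any two partitions (X_1,...,X_k), (Y_1,...,Y_k) of S, max_ℓ v(X_ℓ) ≥ min_ℓ v(Y_ℓ). -/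
open Finset

theorem good_cancelable_is_restricted_MMS_feasible
    {G : Type*} [DecidableEq G]
    (v : Finset G → ℝ) (hnn : ∀ S, 0 ≤ v S)
    (hcancel : ∀ Q R S T : Finset G, Disjoint Q S → Disjoint R T →
      v R ≤ v Q → v T < v S → v (R ∪ T) < v (Q ∪ S))
    (S : Finset G) (k : ℕ) (hk : 0 < k)
    (X Y : Fin k → Finset G)
    (hX : IsPartitionOn S X) (hY : IsPartitionOn S Y) :
    Finset.univ.inf' ⟨⟨0, hk⟩, mem_univ _⟩ (fun ℓ => v (Y ℓ)) ≤
      Finset.univ.sup' ⟨⟨0, hk⟩, mem_univ _⟩ (fun ℓ => v (X ℓ)) := by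
  by_contra h
  push_neg at h
  have hlt : ∀ i j : Fin k, v (X i) < v (Y j) := fun i j =>
    lt_of_le_of_lt (le_sup' (fun ℓ => v (X ℓ)) (mem_univ i)) (lt_of_lt_of_le h (inf'_le (fun ℓ => v (Y ℓ)) (mem_univ j)))
  have key : ∀ A : Finset (Fin k), A.Nonempty → v (A.biUnion X) < v (A.biUnion Y) := by
    intro A hA
    induction A using Finset.cons_induction with
    | empty => exact absurd hA (by simp)
    | cons a A ha ih =>
      rcases A.eq_empty_or_nonempty with rfl | hAne
      · simpa using hlt a a
      · have hIH := ih hAne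
        have hdY : Disjoint (Y a) (A.biUnion Y) := by
          rw [disjoint_biUnion_right]
          exact fun i hi => hY.1 a i (fun hai => ha (hai ▸ hi))
        have hdX : Disjoint (X a) (A.biUnion X) := by
          rw [disjoint_biUnion_right]
          exact fun i hi => hX.1 a i (fun hai => ha (hai ▸ hi))
        have := hcancel (Y a) (X a) (A.biUnion Y) (A.biUnion X) hdY hdX
          (le_of_lt (hlt a a)) hIH
        simpa [Finset.cons_eq_insert, Finset.biUnion_insert] using this
  have hfin := key Finset.univ ⟨⟨0, hk⟩, mem_univ _⟩
  rw [hX.2, hY.2] at hfin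
  exact lt_irrefl _ hfin
end

section
/- Every EFL allocation with additive valuations is 1/2-EFX: if allocation (X_1,...,X_n) is EFL, then for every pair of agents i, j and every good g ∈ X_j, v_i(X_i) ≥ (1/2)·v_i(X_j \ {g}). -/
open Finset

theorem EFL_implies_half_EFX
    {G : Type*} [DecidableEq G] {n : ℕ}
    (w : Fin n → G → ℝ) (hw : ∀ i g, 0 ≤ w i g)
    (V : Fin n → Finset G → ℝ) (hV : ∀ i S, V i S = ∑ g ∈ S, w i g)
    (X : Fin n → Finset G)
    (hdisj : ∀ i j : Fin n, i ≠ j → Disjoint (X i) (X j))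
    (hEFL : ∀ i j : Fin n, (X j).card ≤ 1 ∨
      ∃ g ∈ X j, V i {g} ≤ V i (X i) ∧ V i ((X j).erase g) ≤ V i (X i)) :
    ∀ i j : Fin n, ∀ g ∈ X j,
      (1 / 2 : ℝ) * V i ((X j).erase g) ≤ V i (X i) := by
  intro i j g hg
  have hVi : 0 ≤ V i (X i) := by
    rw [hV]; exact Finset.sum_nonneg fun g _ => hw i g
  rcases hEFL i j with hcard | ⟨g', hg', h1, h2⟩
  · have : X j = {g} := Finset.eq_singleton_iff_unique_mem.mpr
      ⟨hg, fun x hx => Finset.card_le_one.mp hcard x hx g hg⟩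
    rw [this, Finset.erase_singleton, hV, Finset.sum_empty]
    linarith
  · have key : V i ((X j).erase g) ≤ V i ((X j).erase g') + V i {g'} := by
      simp only [hV, Finset.sum_singleton]
      have h3 : ∑ x ∈ (X j).erase g, w i x ≤ ∑ x ∈ X j, w i x :=
        Finset.sum_le_sum_of_subset_of_nonneg (Finset.erase_subset _ _)
          (fun x _ _ => hw i x)
      have h4 : ∑ x ∈ X j, w i x = ∑ x ∈ (X j).erase g', w i x + w i g' := by
        rw [Finset.sum_erase_add _ _ hg']
      linarith
    simp only [hV, Finset.sum_singleton] at *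
    linarith
end

section
/- Every EFL allocation with additive valuations is 2/3-PMMS: if allocation (X_1,...,X_n) is EFL, then for every pair of agents i, j, v_i(X_i) ≥ (2/3)·μ_i(2, X_i ∪ X_j), where μ_i(2, S) is agent i's maximin share when partitioning S into 2 bundles. -/
open Finset

/-- Agent `i`'s maximin share over two bundles obtained by splitting `S` in two:
the maximum over subsets `A ⊆ S` of the minimum of the values of `A` and `S \ A`. -/
noncomputable def mu2 {G : Type*} [DecidableEq G] (V : Finset G → ℝ) (S : Finset G) : ℝ :=
  S.powerset.sup' (Finset.powerset_nonempty S) (fun A => min (V A) (V (S \ A)))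

theorem EFL_implies_two_thirds_PMMS
    {G : Type*} [DecidableEq G] {n : ℕ}
    (w : Fin n → G → ℝ) (hw : ∀ i g, 0 ≤ w i g)
    (V : Fin n → Finset G → ℝ) (hV : ∀ i S, V i S = ∑ g ∈ S, w i g)
    (X : Fin n → Finset G)
    (hdisj : ∀ i j : Fin n, i ≠ j → Disjoint (X i) (X j))
    (hEFL : ∀ i j : Fin n, (X j).card ≤ 1 ∨
      ∃ g ∈ X j, V i {g} ≤ V i (X i) ∧ V i ((X j).erase g) ≤ V i (X i)) :
    ∀ i j : Fin n, (2 / 3 : ℝ) * mu2 (V i) (X i ∪ X j) ≤ V i (X i) := by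
  intro i j
  have hmono : ∀ A B : Finset G, A ⊆ B → V i A ≤ V i B := by
    intro A B hAB
    rw [hV, hV]
    exact Finset.sum_le_sum_of_subset_of_nonneg hAB (fun g _ _ => hw i g)
  have hx : 0 ≤ V i (X i) := by
    rw [hV]; exact Finset.sum_nonneg (fun g _ => hw i g)
  by_cases hij : i = j
  · subst hij
    have hmu : mu2 (V i) (X i ∪ X i) ≤ V i (X i) := by
      apply Finset.sup'_le
      intro A hA
      calc min (V i A) (V i ((X i ∪ X i) \ A)) ≤ V i ((X i ∪ X i) \ A) := min_le_right _ _
        _ ≤ V i (X i) := hmono _ _ (by rw [Finset.union_self]; exact Finset.sdiff_subset)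
    linarith
  · rcases hEFL i j with h1 | ⟨g, hg, h1g, h2g⟩
    · have hmu : mu2 (V i) (X i ∪ X j) ≤ V i (X i) := by
        apply Finset.sup'_le
        intro A hA
        rw [Finset.mem_powerset] at hA
        by_cases hc : X j ⊆ A
        · have hsub : (X i ∪ X j) \ A ⊆ X i := by
            intro a ha
            rw [Finset.mem_sdiff, Finset.mem_union] at ha
            rcases ha.1 with h | h
            · exact h
            · exact absurd (hc h) ha.2
          calc min (V i A) (V i ((X i ∪ X j) \ A)) ≤ V i ((X i ∪ X j) \ A) :=
                min_le_right _ _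
            _ ≤ V i (X i) := hmono _ _ hsub
        · obtain ⟨g, hgX, hgA⟩ := Finset.not_subset.mp hc
          have hsub : A ⊆ X i := by
            intro a ha
            rcases Finset.mem_union.mp (hA ha) with h | h
            · exact h
            · have hag : a = g := Finset.card_le_one.mp h1 a h g hgX
              exact absurd (hag ▸ ha) hgA
          calc min (V i A) (V i ((X i ∪ X j) \ A)) ≤ V i A := min_le_left _ _
            _ ≤ V i (X i) := hmono _ _ hsub
      linarith
    · have hsum : V i (X i ∪ X j) = V i (X i) + V i (X j) := by
        rw [hV, hV, hV, Finset.sum_union (hdisj i j hij)]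
      have hXj : V i (X j) = V i {g} + V i ((X j).erase g) := by
        rw [hV, hV, hV, Finset.sum_singleton]
        exact (Finset.add_sum_erase _ _ hg).symm
      have hmu : mu2 (V i) (X i ∪ X j) ≤ V i (X i ∪ X j) / 2 := by
        apply Finset.sup'_le
        intro A hA
        rw [Finset.mem_powerset] at hA
        have hsplit : V i A + V i ((X i ∪ X j) \ A) = V i (X i ∪ X j) := by
          rw [hV, hV, hV, add_comm]
          exact Finset.sum_sdiff hA
        have := min_le_left (V i A) (V i ((X i ∪ X j) \ A))
        have := min_le_right (V i A) (V i ((X i ∪ X j) \ A))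
        linarith
      linarith
end

section
/- Let X be a partition of goods, let agent i have a monotone valuation, let X_p be an EFX-best bundle for i in X, and form partition X' from X by moving x_p^i (a good of X_p whose removal leaves the largest remaining value for i) from X_p to another bundle X_r. Then agent i does not EFX-envy any bundle of X' other than X_r ∪ {x_p^i} relative to X_p \ {x_p^i}, and whichever of X_p \ {x_p^i} and X_r ∪ {x_p^i} agent i values more is EFX-feasible for i in X'. -/
open Finset

/-- Bundle `Y b` is EFX-feasible for valuation `v` in partition `Y`. -/
def EFXfeasibleIn {G : Type*} [DecidableEq G] {k : ℕ}
    (v : Finset G → ℝ) (Y : Fin k → Finset G) (b : Fin k) : Prop :=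
  ∀ m, ∀ g ∈ Y m, v ((Y m).erase g) ≤ v (Y b)

theorem move_min_good_from_efx_best
    {G : Type*} [DecidableEq G] {k : ℕ}
    (v : Finset G → ℝ) (hmono : ∀ A B : Finset G, A ⊆ B → v A ≤ v B)
    (X : Fin k → Finset G)
    (hdisj : ∀ i j : Fin k, i ≠ j → Disjoint (X i) (X j))
    (x : Fin k → G)
    (hx : ∀ ℓ, (X ℓ).Nonempty →
      x ℓ ∈ X ℓ ∧ ∀ g ∈ X ℓ, v ((X ℓ).erase g) ≤ v ((X ℓ).erase (x ℓ)))
    (p r : Fin k) (hpr : p ≠ r) (hp : (X p).Nonempty)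
    (hbest : ∀ ℓ, X ℓ = ∅ ∨ v ((X ℓ).erase (x ℓ)) ≤ v ((X p).erase (x p)))
    (X' : Fin k → Finset G)
    (hX' : X' = fun m => if m = p then (X p).erase (x p)
      else if m = r then insert (x p) (X r) else X m) :
    (∀ m, m ≠ r → ∀ g ∈ X' m, v ((X' m).erase g) ≤ v ((X p).erase (x p))) ∧
    (v (X' r) ≤ v (X' p) → EFXfeasibleIn v X' p) ∧
    (v (X' p) ≤ v (X' r) → EFXfeasibleIn v X' r) := by

  subst hX'
  have hXp : (fun m => if m = p then (X p).erase (x p)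
      else if m = r then insert (x p) (X r) else X m) p = (X p).erase (x p) := by simp
  have key : ∀ m, m ≠ r → ∀ g ∈ (if m = p then (X p).erase (x p)
      else if m = r then insert (x p) (X r) else X m),
      v ((if m = p then (X p).erase (x p)
      else if m = r then insert (x p) (X r) else X m).erase g) ≤ v ((X p).erase (x p)) := by
    intro m hmr g hg
    by_cases hmp : m = p
    · subst hmp
      simp only [if_pos rfl] at hg ⊢
      exact hmono _ _ (erase_subset _ _)
    · simp only [if_neg hmp, if_neg hmr] at hg ⊢
      rcases hbest m with he | hle
      · simp [he] at hg
      · calc v ((X m).erase g) ≤ v ((X m).erase (x m)) := (hx m ⟨g, hg⟩).2 g hg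
          _ ≤ v ((X p).erase (x p)) := hle
  refine ⟨key, ?_, ?_⟩
  · intro h m g hg
    by_cases hmr : m = r
    · subst hmr
      refine le_trans ?_ h
      exact hmono _ _ (erase_subset _ _)
    · simpa using (key m hmr g hg)
  · intro h m g hg
    by_cases hmr : m = r
    · subst hmr
      exact hmono _ _ (erase_subset _ _)
    · refine le_trans (key m hmr g hg) ?_
      simpa using h
end

section
/- Let X be a partition, i an agent with a monotone valuation, X_ℓ a bundle that is EFL-feasible for i in X, and X_p, X_r bundles with v_i(X_ℓ) ≥ v_i(X_r) and |X_p| ≥ 2, where p ≠ ℓ. If partition X' is obtained from X by removing some good g from X_p and adding it to X_r, then X_ℓ is still EFL-feasible for i in X'. -/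
open Finset

/-- Bundle `X b` is EFL-feasible for valuation `v` in partition `X`. -/
def EFLfeasibleIn {G : Type*} [DecidableEq G] {k : ℕ}
    (v : Finset G → ℝ) (X : Fin k → Finset G) (b : Fin k) : Prop :=
  ∀ m, (X m).card ≤ 1 ∨ ∃ g ∈ X m, v {g} ≤ v (X b) ∧ v ((X m).erase g) ≤ v (X b)

theorem efl_feasible_preserved_by_moving_good
    {G : Type*} [DecidableEq G] {k : ℕ}
    (v : Finset G → ℝ) (hmono : ∀ A B : Finset G, A ⊆ B → v A ≤ v B)
    (X : Fin k → Finset G)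
    (hdisj : ∀ i j : Fin k, i ≠ j → Disjoint (X i) (X j))
    (ℓ p r : Fin k) (hpl : p ≠ ℓ) (hprr : p ≠ r)
    (hefl : EFLfeasibleIn v X ℓ)
    (hval : v (X r) ≤ v (X ℓ)) (hcard : 2 ≤ (X p).card)
    (g : G) (hg : g ∈ X p)
    (X' : Fin k → Finset G)
    (hX' : X' = fun m => if m = p then (X p).erase g
      else if m = r then insert g (X r) else X m) :
    EFLfeasibleIn v X' ℓ := by
  subst hX'
  -- X' ℓ contains X ℓ
  have hXl : v (X ℓ) ≤ v ((fun m => if m = p then (X p).erase g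
      else if m = r then insert g (X r) else X m) ℓ) := by
    simp only [if_neg (Ne.symm hpl)]
    by_cases hlr : ℓ = r
    · subst hlr
      simp only [if_pos rfl]
      exact hmono _ _ (subset_insert _ _)
    · simp [hlr]
  set Xl' := (fun m => if m = p then (X p).erase g
      else if m = r then insert g (X r) else X m) ℓ with hXl'def
  -- witness from EFL-feasibility at p
  rcases hefl p with hc | ⟨g', hg', hw1, hw2⟩
  · omega
  have hgval : v {g} ≤ v (X ℓ) := by
    by_cases hgg : g = g'
    · rw [hgg]; exact hw1
    · refine le_trans (hmono _ _ ?_) hw2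
      simp [singleton_subset_iff, Finset.mem_erase, hgg, hg]
  intro m
  by_cases hmp : m = p
  · right
    simp only [if_pos hmp]
    by_cases hgg : g' = g
    · subst hgg
      -- use any element of (X p).erase g'
      have hne : ((X p).erase g').Nonempty := by
        rw [← Finset.card_pos, Finset.card_erase_of_mem hg]; omega
      obtain ⟨h, hh⟩ := hne
      refine ⟨h, hh, ?_, ?_⟩
      · exact le_trans (le_trans (hmono _ _ (singleton_subset_iff.2 hh)) hw2) hXl
      · exact le_trans (le_trans (hmono _ _ (erase_subset _ _)) hw2) hXl
    · refine ⟨g', Finset.mem_erase.2 ⟨hgg, hg'⟩, le_trans hw1 hXl, ?_⟩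
      refine le_trans (le_trans (hmono _ _ ?_) hw2) hXl
      intro x hx
      simp only [Finset.mem_erase] at hx ⊢
      exact ⟨hx.1, hx.2.2⟩
  · by_cases hmr : m = r
    · right
      simp only [if_neg hmp, if_pos hmr]
      have hgr : g ∉ X r := Finset.disjoint_left.1 (hdisj p r hprr) hg
      refine ⟨g, Finset.mem_insert_self _ _, le_trans hgval hXl, ?_⟩
      rw [Finset.erase_insert hgr]
      exact le_trans hval hXl
    · simp only [if_neg hmp, if_neg hmr]
      rcases hefl m with hc | ⟨g', hg', hw1', hw2'⟩
      · exact Or.inl hc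
      · exact Or.inr ⟨g', hg', le_trans hw1' hXl, le_trans hw2' hXl⟩
end

section
/- Let X_p and X_r be disjoint bundles, let i and j be two agents with restricted MMS-feasible valuations, and let x_p^i, x_p^j ∈ X_p be goods minimizing the marginal loss for i and j respectively (x_p^u ∈ argmax_{g∈X_p} v_u(X_p \ {g})), chosen to coincide if a common minimizer exists. If for some agent u ∈ {i, j}, v_u(X_p \ x_p^u) ≤ v_u(X_r ∪ {x_p^u}), then for the other agent's good x_p^h (h ∈ {i,j}\{u}) we have v_u(X_p \ x_p^h) ≤ v_u(X_p \ x_p^u) ≤ v_u(X_r ∪ {x_p^h}). -/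
open Finset

/-- A valuation is restricted MMS-feasible if for any bundle `S`, any `k`, and any two
partitions of `S` into `k` bundles, the max bundle value of the first partition is at
least the min bundle value of the second. -/
def RMMSFeasible {G : Type*} [DecidableEq G] (v : Finset G → ℝ) : Prop :=
  ∀ (S : Finset G) (k : ℕ) (hk : 0 < k) (X Z : Fin k → Finset G),
    IsPartitionOn S X → IsPartitionOn S Z →
    Finset.univ.inf' ⟨⟨0, hk⟩, mem_univ _⟩ (fun ℓ => v (Z ℓ)) ≤
      Finset.univ.sup' ⟨⟨0, hk⟩, mem_univ _⟩ (fun ℓ => v (X ℓ))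

lemma partition_aux {G : Type*} [DecidableEq G] (Xp Xr : Finset G)
    (hdisj : Disjoint Xp Xr) (a : G) (ha : a ∈ Xp) :
    IsPartitionOn (Xp ∪ Xr) ![Xp.erase a, insert a Xr] := by
  constructor
  · intro i j hij
    fin_cases i <;> fin_cases j <;> simp_all
    · exact hdisj.mono_left (Finset.erase_subset a Xp)
    · exact (hdisj.mono_left (Finset.erase_subset a Xp)).symm
  · ext x
    simp only [Finset.mem_biUnion, Finset.mem_univ, true_and, Finset.mem_union]
    constructor
    · rintro ⟨ℓ, hℓ⟩
      fin_cases ℓ <;> simp_all [Finset.mem_erase, Finset.mem_insert]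
      rcases hℓ with h | h
      · exact Or.inl (h ▸ ha)
      · exact Or.inr h
    · intro hx
      by_cases hxa : x = a
      · exact ⟨1, by simp [hxa]⟩
      · rcases hx with h | h
        · exact ⟨0, by simp [Finset.mem_erase, hxa, h]⟩
        · exact ⟨1, by simp [Finset.mem_insert, h]⟩

lemma core_aux {G : Type*} [DecidableEq G]
    (v : Finset G → ℝ) (hv : RMMSFeasible v)
    (Xp Xr : Finset G) (hdisj : Disjoint Xp Xr)
    (a b : G) (ha : a ∈ Xp) (hb : b ∈ Xp)
    (hminv : ∀ g ∈ Xp, v (Xp.erase g) ≤ v (Xp.erase a))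
    (hyp : v (Xp.erase a) ≤ v (insert a Xr)) :
    v (Xp.erase a) ≤ v (Xp.erase b) ∨ v (Xp.erase a) ≤ v (insert b Xr) := by
  have h2 : (0 : ℕ) < 2 := by norm_num
  have key := hv (Xp ∪ Xr) 2 h2 ![Xp.erase b, insert b Xr] ![Xp.erase a, insert a Xr]
    (partition_aux Xp Xr hdisj b hb) (partition_aux Xp Xr hdisj a ha)
  have hlo : v (Xp.erase a) ≤
      Finset.univ.inf' ⟨⟨0, h2⟩, mem_univ _⟩ (fun ℓ => v (![Xp.erase a, insert a Xr] ℓ)) := by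
    apply Finset.le_inf'
    intro ℓ _
    fin_cases ℓ
    · simp
    · simpa using hyp
  obtain ⟨ℓ, -, hℓ⟩ := Finset.exists_mem_eq_sup' ⟨⟨0, h2⟩, mem_univ _⟩
    (fun ℓ => v (![Xp.erase b, insert b Xr] ℓ))
  rw [hℓ] at key
  have := hlo.trans key
  fin_cases ℓ
  · exact Or.inl (by simpa using this)
  · exact Or.inr (by simpa using this)

theorem findmins_lemma
    {G : Type*} [DecidableEq G]
    (vi vj : Finset G → ℝ) (hi : RMMSFeasible vi) (hj : RMMSFeasible vj)
    (Xp Xr : Finset G) (hdisj : Disjoint Xp Xr)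
    (xpi xpj : G) (hxi : xpi ∈ Xp) (hxj : xpj ∈ Xp)
    (hmini : ∀ g ∈ Xp, vi (Xp.erase g) ≤ vi (Xp.erase xpi))
    (hminj : ∀ g ∈ Xp, vj (Xp.erase g) ≤ vj (Xp.erase xpj))
    (hcommon : (∃ g ∈ Xp, (∀ g' ∈ Xp, vi (Xp.erase g') ≤ vi (Xp.erase g)) ∧
        (∀ g' ∈ Xp, vj (Xp.erase g') ≤ vj (Xp.erase g))) → xpi = xpj) :
    (vi (Xp.erase xpi) ≤ vi (insert xpi Xr) →
      vi (Xp.erase xpj) ≤ vi (Xp.erase xpi) ∧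
        vi (Xp.erase xpi) ≤ vi (insert xpj Xr)) ∧
    (vj (Xp.erase xpj) ≤ vj (insert xpj Xr) →
      vj (Xp.erase xpi) ≤ vj (Xp.erase xpj) ∧
        vj (Xp.erase xpj) ≤ vj (insert xpi Xr)) := by
  by_cases heq : xpi = xpj
  · subst heq
    exact ⟨fun h => ⟨le_refl _, h⟩, fun h => ⟨le_refl _, h⟩⟩
  · constructor
    · intro hyp
      refine ⟨hmini xpj hxj, ?_⟩
      rcases core_aux vi hi Xp Xr hdisj xpi xpj hxi hxj hmini hyp with h | h
      · exact absurd (hcommon ⟨xpj, hxj,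
          fun g' hg' => (hmini g' hg').trans h, hminj⟩) heq
      · exact h
    · intro hyp
      refine ⟨hminj xpi hxi, ?_⟩
      rcases core_aux vj hj Xp Xr hdisj xpj xpi hxj hxi hminj hyp with h | h
      · exact absurd (hcommon ⟨xpi, hxi, hmini,
          fun g' hg' => (hminj g' hg').trans h⟩) heq
      · exact h
end

section
/- Let X and Z be two partitions of all goods with the same number of bundles, let agent i have a monotone restricted MMS-feasible valuation, let Z_a ∈ Z, and let Y' ⊆ X ∩ Z be a set of bundles occurring in both partitions such that i does not EFX-envy any bundle of Y' relative to Z_a. Let Y = X \ Y'. If Z_a is not EEFX-feasible for i in Z, then the bundle of Y most valuable to i, Best_i(Y), is EFX-feasible for i in X and satisfies v_i(Best_i(Y)) ≥ v_i(Z_a). -/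
open Finset

section PotentialSetup
variable {G : Type*} [DecidableEq G] [Fintype G] (v : Finset G → ℝ)

/-- minimal positive gap between achievable valuation values (or 1 if none). -/
noncomputable def vgap : ℝ :=
  let V : Finset ℝ := (univ : Finset G).powerset.image v
  let D : Finset ℝ := ((V ×ˢ V).filter (fun p => p.1 < p.2)).image (fun p => p.2 - p.1)
  if h : D.Nonempty then D.min' h else 1

lemma vgap_pos : 0 < vgap v (G := G) := by
  rw [vgap]
  split
  · next h =>
    have := Finset.min'_mem _ h
    simp only [mem_image, mem_filter, mem_product] at this
    obtain ⟨p, ⟨_, hlt⟩, heq⟩ := this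
    rw [← heq]; linarith
  · norm_num

lemma vgap_le {A B : Finset G} (hAB : v A < v B) : vgap v ≤ v B - v A := by
  rw [vgap]
  have hmemD : v B - v A ∈ ((((univ : Finset G).powerset.image v) ×ˢ ((univ : Finset G).powerset.image v)).filter
      (fun p => p.1 < p.2)).image (fun p => p.2 - p.1) := by
    refine mem_image.mpr ⟨(v A, v B), ?_, rfl⟩
    rw [mem_filter, mem_product]
    exact ⟨⟨mem_image_of_mem v (mem_powerset.mpr (subset_univ A)),
      mem_image_of_mem v (mem_powerset.mpr (subset_univ B))⟩, hAB⟩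
  split
  · next h => exact Finset.min'_le _ _ hmemD
  · next h => exact absurd ⟨_, hmemD⟩ h

/-- perturbed weight encoding (value, card) lexicographically. -/
noncomputable def pw (A : Finset G) : ℝ :=
  v A + (vgap v (G := G) / (2 * Fintype.card G + 2)) * A.card

lemma eps_pos : 0 < vgap v (G := G) / (2 * Fintype.card G + 2) := by
  apply div_pos (vgap_pos v); positivity

lemma eps_card_le (A : Finset G) :
    (vgap v (G := G) / (2 * Fintype.card G + 2)) * A.card < vgap v := by
  have h1 : (A.card : ℝ) ≤ Fintype.card G := by
    exact_mod_cast card_le_card (subset_univ A)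
  have h2 : (0:ℝ) < 2 * Fintype.card G + 2 := by positivity
  rw [div_mul_eq_mul_div, div_lt_iff₀ h2]
  nlinarith [vgap_pos v (G := G)]

lemma pw_lt_of_v_lt {A B : Finset G} (hAB : v A < v B) : pw v A < pw v B := by
  have h1 := vgap_le v hAB
  have h2 := eps_card_le v A
  have h3 : (0:ℝ) ≤ (vgap v (G := G) / (2 * Fintype.card G + 2)) * B.card := by
    have := eps_pos v (G := G); positivity
  rw [pw, pw]
  linarith

lemma pw_lt_insert {A : Finset G} {g : G}
    (hmono : ∀ A B : Finset G, A ⊆ B → v A ≤ v B) (hg : g ∉ A) :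
    pw v A < pw v (insert g A) := by
  have h1 : v A ≤ v (insert g A) := hmono _ _ (subset_insert g A)
  have h2 : (insert g A).card = A.card + 1 := card_insert_of_notMem hg
  have h3 := eps_pos v (G := G)
  rw [pw, pw, h2]
  push_cast
  nlinarith

/-- achievable perturbed weights -/
noncomputable def pwSet : Finset ℝ := (univ : Finset G).powerset.image (pw v)

lemma pw_mem_pwSet (A : Finset G) : pw v A ∈ pwSet v :=
  mem_image_of_mem _ (mem_powerset.mpr (subset_univ A))

/-- potential of a single weight -/
noncomputable def pot (u : ℝ) : ℝ := (1/3 : ℝ) ^ (((pwSet v (G := G)).filter (fun x => x < u)).card)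

lemma pot_pos (u : ℝ) : 0 < pot v (G := G) u := by rw [pot]; positivity

lemma pot_step {u₁ : ℝ} (hu₁ : u₁ ∈ pwSet v (G := G)) {u₂ : ℝ} (h12 : u₁ < u₂) :
    pot v (G := G) u₂ ≤ pot v (G := G) u₁ / 3 := by
  have hsub : insert u₁ ((pwSet v (G := G)).filter (fun x => x < u₁)) ⊆
      (pwSet v (G := G)).filter (fun x => x < u₂) := by
    refine insert_subset (mem_filter.mpr ⟨hu₁, h12⟩) ?_
    intro x hx
    rw [mem_filter] at hx ⊢
    exact ⟨hx.1, lt_trans hx.2 h12⟩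
  have hcard : ((pwSet v (G := G)).filter (fun x => x < u₁)).card + 1 ≤
      ((pwSet v (G := G)).filter (fun x => x < u₂)).card := by
    have h1 := card_le_card hsub
    have h2 := card_insert_of_notMem
      (s := (pwSet v (G := G)).filter (fun x => x < u₁)) (a := u₁)
      (fun h => lt_irrefl u₁ (mem_filter.mp h).2)
    omega
  rw [pot, pot]
  calc (1/3 : ℝ) ^ (((pwSet v (G := G)).filter (fun x => x < u₂)).card)
      ≤ (1/3 : ℝ) ^ (((pwSet v (G := G)).filter (fun x => x < u₁)).card + 1) :=
        pow_le_pow_of_le_one (by norm_num) (by norm_num) hcard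
    _ = _ := by rw [pow_succ]; ring

end PotentialSetup

theorem exists_threshold_partition {G : Type*} [DecidableEq G] [Fintype G]
    (v : Finset G → ℝ) (hmono : ∀ A B : Finset G, A ⊆ B → v A ≤ v B)
    (R : Finset G) (r : ℕ) (hr : 0 < r) (c : ℝ)
    (H : ∀ Q : Fin r → Finset G, IsPartitionOn R Q → ∃ j, v (Q j) < c) :
    ∃ Q : Fin r → Finset G, IsPartitionOn R Q ∧ ∀ j, ∀ g ∈ Q j, v ((Q j).erase g) ≤ c := by
  classical
  set μ : (Fin r → Finset G) → ℝ := fun Q => -(∑ j, pot v (pw v (Q j))) with hμ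
  set A : Finset (Fin r → Finset G) := univ.filter (fun Q => IsPartitionOn R Q) with hA
  have hA0 : (fun j => if j = ⟨0, hr⟩ then R else ∅) ∈ A := by
    rw [hA, mem_filter]
    refine ⟨mem_univ _, ⟨?_, ?_⟩⟩
    · intro i j hij
      by_cases hi : i = ⟨0, hr⟩ <;> by_cases hj : j = ⟨0, hr⟩ <;> simp_all
    · ext x
      simp only [mem_biUnion, mem_univ, true_and]
      constructor
      · rintro ⟨l, hl⟩
        by_cases h : l = ⟨0, hr⟩ <;> simp_all
      · intro hx
        exact ⟨⟨0, hr⟩, by simp [hx]⟩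
  obtain ⟨Q, hQA, hQmax⟩ := A.exists_max_image μ ⟨_, hA0⟩
  have hQpart : IsPartitionOn R Q := by
    rw [hA, mem_filter] at hQA; exact hQA.2
  refine ⟨Q, hQpart, ?_⟩
  by_contra hviol
  push_neg at hviol
  obtain ⟨j, g, hgQj, hbig⟩ := hviol
  obtain ⟨i, -, hi⟩ := (univ : Finset (Fin r)).exists_min_image (fun l => pw v (Q l)) ⟨⟨0,hr⟩, mem_univ _⟩
  have hvi : v (Q i) < c := by
    obtain ⟨j0, hj0⟩ := H Q hQpart
    by_contra h
    push_neg at h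
    exact absurd (hi j0 (mem_univ _)) (not_le.mpr (pw_lt_of_v_lt v (lt_of_lt_of_le hj0 h)))
  have hji : j ≠ i := by
    rintro rfl
    exact absurd hbig (not_lt.mpr (le_trans (hmono _ _ (erase_subset g (Q j))) hvi.le))
  have hgi : g ∉ Q i := fun h =>
    (hQpart.1 j i hji).forall_ne_finset hgQj h rfl
  set Q' : Fin r → Finset G := fun l => if l = i then insert g (Q i) else if l = j then (Q j).erase g else Q l with hQ'
  have hQ'i : Q' i = insert g (Q i) := by simp [hQ']
  have hQ'j : Q' j = (Q j).erase g := by simp [hQ', hji]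
  have hQ'other : ∀ l, l ≠ i → l ≠ j → Q' l = Q l := by
    intro l h1 h2; simp [hQ', h1, h2]
  -- each new bundle is a subset of old bundle union {g}, g ∈ Q j
  have hdisj : ∀ l1 l2, l1 ≠ l2 → Disjoint (Q' l1) (Q' l2) := by
    have key : ∀ l1 l2, l1 ≠ l2 → l1 = i → Disjoint (Q' l1) (Q' l2) := by
      rintro l1 l2 hne rfl
      rw [hQ'i, disjoint_insert_left]
      rcases eq_or_ne l2 j with rfl | h2j
      · rw [hQ'j]
        exact ⟨notMem_erase g _, (hQpart.1 l1 l2 hne).mono_right (erase_subset g _)⟩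
      · rw [hQ'other l2 (Ne.symm hne) h2j]
        exact ⟨fun h => (hQpart.1 j l2 h2j.symm).forall_ne_finset hgQj h rfl,
          hQpart.1 l1 l2 hne⟩
    intro l1 l2 hne
    rcases eq_or_ne l1 i with rfl | h1i
    · exact key _ _ hne rfl
    rcases eq_or_ne l2 i with rfl | h2i
    · exact (key _ _ (Ne.symm hne) rfl).symm
    by_cases h1j : l1 = j
    · have h2j : l2 ≠ j := fun h => hne (h1j.trans h.symm)
      rw [h1j, hQ'j, hQ'other l2 h2i h2j]
      exact (hQpart.1 _ _ (h1j ▸ hne : (j:Fin r) ≠ l2)).mono_left (erase_subset g _)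
    by_cases h2j : l2 = j
    · rw [hQ'other l1 h1i h1j, h2j, hQ'j]
      exact (hQpart.1 _ _ (h2j ▸ hne : l1 ≠ j)).mono_right (erase_subset g _)
    · rw [hQ'other l1 h1i h1j, hQ'other l2 h2i h2j]
      exact hQpart.1 _ _ hne
  have hunion : Finset.univ.biUnion Q' = R := by
    rw [← hQpart.2]
    ext x
    simp only [mem_biUnion, mem_univ, true_and]
    constructor
    · rintro ⟨l, hl⟩
      by_cases h1i : l = i
      · rw [h1i, hQ'i, mem_insert] at hl
        rcases hl with rfl | hl
        · exact ⟨j, hgQj⟩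
        · exact ⟨i, hl⟩
      by_cases h1j : l = j
      · rw [h1j, hQ'j] at hl
        exact ⟨j, mem_of_mem_erase hl⟩
      · rw [hQ'other l h1i h1j] at hl
        exact ⟨l, hl⟩
    · rintro ⟨l, hl⟩
      by_cases h1i : l = i
      · exact ⟨i, by rw [hQ'i]; exact mem_insert_of_mem (h1i ▸ hl)⟩
      by_cases h1j : l = j
      · rcases eq_or_ne x g with rfl | hxg
        · exact ⟨i, by rw [hQ'i]; exact mem_insert_self _ _⟩
        · exact ⟨j, by rw [hQ'j]; exact mem_erase.mpr ⟨hxg, h1j ▸ hl⟩⟩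
      · exact ⟨l, by rw [hQ'other l h1i h1j]; exact hl⟩
  have hQ'part : IsPartitionOn R Q' := ⟨hdisj, hunion⟩
  -- potential strictly increases
  have hx : pw v (Q i) < pw v (Q' i) := by rw [hQ'i]; exact pw_lt_insert v hmono hgi
  have hy : pw v (Q i) < pw v (Q' j) := by
    rw [hQ'j]; exact pw_lt_of_v_lt v (lt_trans hvi hbig)
  have hFi : pot v (pw v (Q' i)) ≤ pot v (pw v (Q i)) / 3 :=
    pot_step v (pw_mem_pwSet v _) hx
  have hFj : pot v (pw v (Q' j)) ≤ pot v (pw v (Q i)) / 3 :=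
    pot_step v (pw_mem_pwSet v _) hy
  have hsum : ∑ l, pot v (pw v (Q' l)) < ∑ l, pot v (pw v (Q l)) := by
    have hjmem : j ∈ (univ : Finset (Fin r)).erase i := mem_erase.mpr ⟨hji, mem_univ _⟩
    have e1 : ∀ (f : Fin r → ℝ), ∑ l, f l = f i + (f j + ∑ l ∈ ((univ : Finset (Fin r)).erase i).erase j, f l) := by
      intro f
      rw [← Finset.add_sum_erase _ f (mem_univ i), ← Finset.add_sum_erase _ f hjmem]
    rw [e1 (fun l => pot v (pw v (Q' l))), e1 (fun l => pot v (pw v (Q l)))]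
    have e2 : ∑ l ∈ ((univ : Finset (Fin r)).erase i).erase j, pot v (pw v (Q' l)) =
        ∑ l ∈ ((univ : Finset (Fin r)).erase i).erase j, pot v (pw v (Q l)) := by
      apply Finset.sum_congr rfl
      intro l hl
      rw [hQ'other l (mem_erase.mp (mem_of_mem_erase hl)).1 (mem_erase.mp hl).1]
    rw [e2]
    have h1 := pot_pos v (G := G) (pw v (Q i))
    have h2 := pot_pos v (G := G) (pw v (Q j))
    linarith
  have : μ Q < μ Q' := by rw [hμ]; simp only; linarith
  exact absurd (hQmax Q' (mem_filter.mpr ⟨mem_univ _, hQ'part⟩)) (not_le.mpr this)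

theorem glue_partition {G : Type*} [DecidableEq G] [Fintype G] {k : ℕ}
    (X : Fin k → Finset G) (hX : IsPartitionOn Finset.univ X)
    (Y' : Finset (Finset G))
    (hY'X : ∀ B ∈ Y', ∃ ℓ, X ℓ = B)
    {n : ℕ} (hn : ((univ : Finset (Fin k)).filter (fun ℓ => X ℓ ∉ Y')).card = n)
    (P : Fin n → Finset G)
    (hP : IsPartitionOn (((univ : Finset (Fin k)).filter (fun ℓ => X ℓ ∉ Y')).biUnion X) P) :
    ∃ W : Fin k → Finset G, IsPartitionOn Finset.univ W ∧
      (∀ ℓ, X ℓ ∈ Y' → W ℓ = X ℓ) ∧ (∀ ℓ, X ℓ ∉ Y' → ∃ j, W ℓ = P j) ∧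
      (∀ j, ∃ ℓ, W ℓ = P j) := by
  classical
  set Yset : Finset (Fin k) := (univ : Finset (Fin k)).filter (fun ℓ => X ℓ ∉ Y') with hYset
  have hmemY : ∀ ℓ, ℓ ∈ Yset ↔ X ℓ ∉ Y' := by
    intro ℓ; rw [hYset, mem_filter]; simp
  set e := Yset.orderIsoOfFin hn with he
  set W : Fin k → Finset G := fun ℓ =>
    if h : ℓ ∈ Yset then P (e.symm ⟨ℓ, h⟩) else X ℓ with hW
  have hWin : ∀ ℓ (h : ℓ ∈ Yset), W ℓ = P (e.symm ⟨ℓ, h⟩) := by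
    intro ℓ h; rw [hW]; simp [h]
  have hWout : ∀ ℓ, ℓ ∉ Yset → W ℓ = X ℓ := by
    intro ℓ h; rw [hW]; simp [h]
  have hWeP : ∀ j, W ((e j : {x // x ∈ Yset}) : Fin k) = P j := by
    intro j
    rw [hWin _ (e j).2]
    congr 1
    rw [show (⟨((e j : {x // x ∈ Yset}) : Fin k), (e j).2⟩ : {x // x ∈ Yset}) = e j from Subtype.ext rfl]
    exact e.symm_apply_apply j
  have hPsub : ∀ j, P j ⊆ Yset.biUnion X := by
    intro j
    rw [← hP.2]
    exact subset_biUnion_of_mem P (mem_univ j)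
  have hSdisj : ∀ ℓ, ℓ ∉ Yset → Disjoint (Yset.biUnion X) (X ℓ) := by
    intro ℓ hℓ
    rw [disjoint_biUnion_left]
    intro l hl
    exact hX.1 l ℓ (fun h => hℓ (h ▸ hl))
  refine ⟨W, ⟨?_, ?_⟩, fun ℓ h => hWout ℓ (fun hm => ((hmemY ℓ).1 hm) h), ?_, ?_⟩
  · intro l1 l2 hne
    by_cases h1 : l1 ∈ Yset <;> by_cases h2 : l2 ∈ Yset
    · rw [hWin l1 h1, hWin l2 h2]
      apply hP.1
      intro heq
      apply hne
      have := congrArg (fun t => ((e t : {x // x ∈ Yset}) : Fin k)) heq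
      simpa [e.apply_symm_apply] using this
    · rw [hWin l1 h1, hWout l2 h2]
      exact ((hSdisj l2 h2).mono_left (hPsub _)).symm.symm
    · rw [hWout l1 h1, hWin l2 h2]
      exact ((hSdisj l1 h1).mono_left (hPsub _)).symm
    · rw [hWout l1 h1, hWout l2 h2]
      exact hX.1 l1 l2 hne
  · rw [Finset.eq_univ_iff_forall]
    intro x
    have hx : x ∈ Finset.univ.biUnion X := by rw [hX.2]; exact mem_univ x
    obtain ⟨l, -, hl⟩ := mem_biUnion.mp hx
    by_cases h : l ∈ Yset
    · have hxS : x ∈ Yset.biUnion X := mem_biUnion.mpr ⟨l, h, hl⟩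
      rw [← hP.2] at hxS
      obtain ⟨j, -, hj⟩ := mem_biUnion.mp hxS
      exact mem_biUnion.mpr ⟨((e j : {x // x ∈ Yset}) : Fin k), mem_univ _, by rw [hWeP]; exact hj⟩
    · exact mem_biUnion.mpr ⟨l, mem_univ _, by rw [hWout l h]; exact hl⟩
  · intro ℓ h
    have hm : ℓ ∈ Yset := (hmemY ℓ).2 h
    exact ⟨_, hWin ℓ hm⟩
  · intro j
    exact ⟨_, hWeP j⟩


theorem best_remaining_bundle_is_efx_feasible
    {G : Type*} [DecidableEq G] [Fintype G] {k : ℕ}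
    (v : Finset G → ℝ) (hmono : ∀ A B : Finset G, A ⊆ B → v A ≤ v B)
    (hrmf : RMMSFeasible v)
    (X Z : Fin k → Finset G)
    (hX : IsPartitionOn Finset.univ X) (hZ : IsPartitionOn Finset.univ Z)
    (a : Fin k)
    (Y' : Finset (Finset G))
    (hY' : ∀ B ∈ Y', (∃ ℓ, X ℓ = B) ∧ (∃ ℓ, Z ℓ = B))
    (hnoenvy : ∀ B ∈ Y', ∀ g ∈ B, v (B.erase g) ≤ v (Z a))
    (hnotEEFX : ¬ ∃ W : Fin k → Finset G, IsPartitionOn Finset.univ W ∧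
        ∃ b, W b = Z a ∧ EFXfeasibleIn v W b) :
    ∃ m : Fin k, X m ∉ Y' ∧ (∀ ℓ, X ℓ ∉ Y' → v (X ℓ) ≤ v (X m)) ∧
      EFXfeasibleIn v X m ∧ v (Z a) ≤ v (X m) := by
  classical
  have hK : ∃ ℓ, X ℓ ∉ Y' ∧ v (Z a) ≤ v (X ℓ) := by
    by_contra hK
    push_neg at hK
    apply hnotEEFX
    set Yset : Finset (Fin k) := (univ : Finset (Fin k)).filter (fun ℓ => X ℓ ∉ Y') with hYset
    have hmemY : ∀ ℓ, ℓ ∈ Yset ↔ X ℓ ∉ Y' := by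
      intro ℓ; rw [hYset, mem_filter]; simp
    have hCH : ∀ ℓ ∈ Yset, v (X ℓ) < v (Z a) := fun ℓ h => hK ℓ ((hmemY ℓ).1 h)
    set S : Finset G := Yset.biUnion X with hS
    -- any partition of S into Yset.card parts has a part of value < v (Z a)
    have hsmallgen : ∀ (m : ℕ), Yset.card = m → 0 < m →
        ∀ Qp : Fin m → Finset G, IsPartitionOn S Qp → ∃ j, v (Qp j) < v (Z a) := by
      intro m hm hmp Qp hQp
      set e := Yset.orderIsoOfFin hm with he
      set Xp : Fin m → Finset G := fun i => X ((e i : {x // x ∈ Yset}) : Fin k) with hXpdef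
      have hXp : IsPartitionOn S Xp := by
        constructor
        · intro i j hij
          apply hX.1
          intro heq
          exact hij (e.injective (Subtype.coe_injective heq))
        · ext x
          simp only [mem_biUnion, mem_univ, true_and, hXpdef]
          constructor
          · rintro ⟨i, hi⟩
            exact mem_biUnion.mpr ⟨_, (e i).2, hi⟩
          · intro hx
            obtain ⟨ℓ, hℓY, hℓ⟩ := mem_biUnion.mp hx
            refine ⟨e.symm ⟨ℓ, hℓY⟩, ?_⟩
            rw [e.apply_symm_apply]
            exact hℓ
      have hcmp := hrmf S m hmp Xp Qp hXp hQp
      have hsup : (univ : Finset (Fin m)).sup' ⟨⟨0, hmp⟩, mem_univ _⟩ (fun ℓ => v (Xp ℓ)) < v (Z a) := by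
        refine (Finset.sup'_lt_iff (H := _)).mpr ?_
        intro i _
        exact hCH _ (e i).2
      have hinf := lt_of_le_of_lt hcmp hsup
      replace hinf := (Finset.inf'_lt_iff (H := _)).mp hinf
      obtain ⟨j, -, hj⟩ := hinf
      exact ⟨j, hj⟩
    by_cases hZaY : Z a ∈ Y'
    · -- Case A : Z a occurs among the Y' bundles
      obtain ⟨b, hb⟩ := (hY' _ hZaY).1
      have hbY : X b ∈ Y' := by rw [hb]; exact hZaY
      by_cases hn0 : Yset.card = 0
      · have hall : ∀ ℓ, X ℓ ∈ Y' := by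
          intro ℓ
          by_contra h
          exact absurd (card_eq_zero.mp hn0 ▸ (hmemY ℓ).2 h) (notMem_empty ℓ)
        refine ⟨X, hX, b, hb, fun mℓ g hg => ?_⟩
        rw [hb]
        exact hnoenvy _ (hall mℓ) g hg
      · have hpos : 0 < Yset.card := Nat.pos_of_ne_zero hn0
        obtain ⟨Q, hQpart, hQer⟩ := exists_threshold_partition v hmono S Yset.card hpos
          (v (Z a)) (hsmallgen _ rfl hpos)
        obtain ⟨W, hWpart, hWout, hWin, -⟩ := glue_partition X hX Y'
          (fun B hB => (hY' B hB).1) rfl Q hQpart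
        refine ⟨W, hWpart, b, ?_, ?_⟩
        · rw [hWout b hbY]; exact hb
        · intro mℓ g hg
          have hWb : v (W b) = v (Z a) := by rw [hWout b hbY, hb]
          rw [hWb]
          by_cases hm : X mℓ ∈ Y'
          · rw [hWout mℓ hm] at hg ⊢
            exact hnoenvy _ hm g hg
          · obtain ⟨j, hj⟩ := hWin mℓ hm
            rw [hj] at hg ⊢
            exact hQer j g hg
    · -- Case B : Z a is not a Y' bundle
      have hZaS : Z a ⊆ S := by
        intro g hg
        have hx : g ∈ Finset.univ.biUnion X := by rw [hX.2]; exact mem_univ g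
        obtain ⟨ℓ, -, hℓ⟩ := mem_biUnion.mp hx
        refine mem_biUnion.mpr ⟨ℓ, (hmemY ℓ).2 ?_, hℓ⟩
        intro hmem
        obtain ⟨ℓ', hℓ'⟩ := (hY' _ hmem).2
        have hne : ℓ' ≠ a := by
          intro h
          rw [h] at hℓ'
          exact hZaY (hℓ' ▸ hmem)
        exact disjoint_left.mp (hZ.1 ℓ' a hne) (hℓ' ▸ hℓ) hg
      by_cases hn0 : Yset.card = 0
      · have hall : ∀ ℓ, X ℓ ∈ Y' := by
          intro ℓ
          by_contra h
          exact absurd (card_eq_zero.mp hn0 ▸ (hmemY ℓ).2 h) (notMem_empty ℓ)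
        have hSe : S = ∅ := by
          rw [hS, card_eq_zero.mp hn0, biUnion_empty]
        have hZae : Z a = ∅ := subset_empty.mp (hSe ▸ hZaS)
        have hXb : ∃ b, X b = ∅ := by
          by_contra hno
          push_neg at hno
          choose σ hσ using fun ℓ => (hY' (X ℓ) (hall ℓ)).2
          have hinj : Function.Injective σ := by
            intro l1 l2 h
            by_contra hne
            have hXe : X l1 = X l2 := by rw [← hσ l1, ← hσ l2, h]
            obtain ⟨x, hx⟩ := (hno l1)
            exact disjoint_left.mp (hX.1 l1 l2 hne) hx (hXe ▸ hx)
          obtain ⟨ℓ, hℓ⟩ := Finite.surjective_of_injective hinj a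
          apply hZaY
          rw [show Z a = X ℓ from by rw [← hℓ]; exact hσ ℓ]
          exact hall ℓ
        obtain ⟨b, hb⟩ := hXb
        refine ⟨X, hX, b, by rw [hb, hZae], fun mℓ g hg => ?_⟩
        have : v (X b) = v (Z a) := by rw [hb, hZae]
        rw [this]
        exact hnoenvy _ (hall mℓ) g hg
      · have hpos : 0 < Yset.card := Nat.pos_of_ne_zero hn0
        by_cases hn1 : Yset.card = 1
        · obtain ⟨m0, hm0⟩ := card_eq_one.mp hn1
          have hSm : S = X m0 := by rw [hS, hm0, singleton_biUnion]
          have h1 : v (Z a) ≤ v (X m0) := hmono _ _ (hSm ▸ hZaS)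
          have h2 : v (X m0) < v (Z a) := hCH m0 (hm0 ▸ mem_singleton_self m0)
          exact absurd h1 (not_le.mpr h2)
        · obtain ⟨r, hcard'⟩ : ∃ r, Yset.card = r + 1 :=
            ⟨Yset.card - 1, (Nat.succ_pred_eq_of_pos hpos).symm⟩
          have hrpos : 0 < r := by omega
          set R : Finset G := S \ Z a with hR
          have hconspart : ∀ Q : Fin r → Finset G, IsPartitionOn R Q →
              IsPartitionOn S (Fin.cons (Z a) Q) := by
            intro Q hQ
            have hQsub : ∀ l, Q l ⊆ R := by
              intro l
              rw [← hQ.2]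
              exact subset_biUnion_of_mem Q (mem_univ l)
            have hdZR : ∀ l, Disjoint (Z a) (Q l) := fun l =>
              Finset.disjoint_sdiff.mono_right (hQsub l)
            constructor
            · intro i j hij
              rcases Fin.eq_zero_or_eq_succ i with rfl | ⟨i', rfl⟩ <;>
                rcases Fin.eq_zero_or_eq_succ j with rfl | ⟨j', rfl⟩
              · exact absurd rfl hij
              · simpa [Fin.cons_zero, Fin.cons_succ] using hdZR j'
              · simpa [Fin.cons_zero, Fin.cons_succ] using (hdZR i').symm
              · simp only [Fin.cons_succ]
                exact hQ.1 i' j' (fun h => hij (by rw [h]))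
            · ext x
              simp only [mem_biUnion, mem_univ, true_and]
              constructor
              · rintro ⟨i, hi⟩
                rcases Fin.eq_zero_or_eq_succ i with rfl | ⟨i', rfl⟩
                · rw [Fin.cons_zero] at hi
                  exact hZaS hi
                · rw [Fin.cons_succ] at hi
                  exact (sdiff_subset : S \ Z a ⊆ S) (hQsub i' hi)
              · intro hxS
                by_cases hxZ : x ∈ Z a
                · exact ⟨0, by rw [Fin.cons_zero]; exact hxZ⟩
                · have hxR : x ∈ R := mem_sdiff.mpr ⟨hxS, hxZ⟩
                  rw [← hQ.2] at hxR
                  obtain ⟨l, -, hl⟩ := mem_biUnion.mp hxR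
                  exact ⟨l.succ, by rw [Fin.cons_succ]; exact hl⟩
          have hHR : ∀ Q : Fin r → Finset G, IsPartitionOn R Q → ∃ j, v (Q j) < v (Z a) := by
            intro Q hQ
            obtain ⟨j, hj⟩ := hsmallgen (r + 1) hcard' (Nat.succ_pos r)
              (Fin.cons (Z a) Q) (hconspart Q hQ)
            rcases Fin.eq_zero_or_eq_succ j with rfl | ⟨j', rfl⟩
            · rw [Fin.cons_zero] at hj
              exact absurd hj (lt_irrefl _)
            · rw [Fin.cons_succ] at hj
              exact ⟨j', hj⟩
          obtain ⟨Q, hQpart, hQer⟩ := exists_threshold_partition v hmono R r hrpos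
            (v (Z a)) hHR
          have hPer : ∀ j, ∀ g ∈ (Fin.cons (Z a) Q : Fin (r+1) → Finset G) j,
              v (((Fin.cons (Z a) Q : Fin (r+1) → Finset G) j).erase g) ≤ v (Z a) := by
            intro j g hg
            rcases Fin.eq_zero_or_eq_succ j with rfl | ⟨j', rfl⟩
            · rw [Fin.cons_zero]
              exact hmono _ _ (erase_subset g (Z a))
            · rw [Fin.cons_succ] at hg ⊢
              exact hQer j' g hg
          obtain ⟨W, hWpart, hWout, hWin, hWsur⟩ := glue_partition X hX Y'
            (fun B hB => (hY' B hB).1) hcard' (Fin.cons (Z a) Q) (hconspart Q hQpart)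
          obtain ⟨b, hbW⟩ := hWsur 0
          rw [Fin.cons_zero] at hbW
          refine ⟨W, hWpart, b, hbW, ?_⟩
          intro mℓ g hg
          rw [hbW]
          by_cases hm : X mℓ ∈ Y'
          · rw [hWout mℓ hm] at hg ⊢
            exact hnoenvy _ hm g hg
          · obtain ⟨j, hj⟩ := hWin mℓ hm
            rw [hj] at hg ⊢
            exact hPer j g hg
  obtain ⟨ℓ₀, hℓ₀, hcℓ₀⟩ := hK
  obtain ⟨m, hmT, hmax⟩ := ((univ : Finset (Fin k)).filter (fun ℓ => X ℓ ∉ Y')).exists_max_image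
    (fun ℓ => v (X ℓ)) ⟨ℓ₀, mem_filter.mpr ⟨mem_univ _, hℓ₀⟩⟩
  have hmY : X m ∉ Y' := (mem_filter.mp hmT).2
  have hmaxv : ∀ ℓ, X ℓ ∉ Y' → v (X ℓ) ≤ v (X m) := fun ℓ h =>
    hmax ℓ (mem_filter.mpr ⟨mem_univ _, h⟩)
  have hZam : v (Z a) ≤ v (X m) := le_trans hcℓ₀ (hmaxv ℓ₀ hℓ₀)
  refine ⟨m, hmY, hmaxv, ?_, hZam⟩
  intro ℓ g hg
  by_cases h : X ℓ ∈ Y'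
  · exact le_trans (hnoenvy _ h g hg) hZam
  · exact le_trans (hmono _ _ (erase_subset g (X ℓ))) (hmaxv ℓ h)
end

section
/- The envy-cycle elimination procedure terminates: repeatedly rotating associations along any directed cycle of the generalized envy graph (each agent in the cycle takes the bundle she envies) must stop after finitely many rotations, because each rotation strictly increases some associated agent's value and never decreases any associated agent's value, while the number of possible assignments of bundles to agents is finite. -/
open Finset

/-- Edge of the generalized envy graph: bundle `a` is associated with an agent who
values bundle `b` strictly more than `a`. -/
def EnvyEdge {G : Type*} {k n : ℕ} (v : Fin n → Finset G → ℝ)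
    (X : Fin k → Finset G) (f : Fin k → Option (Fin n)) (a b : Fin k) : Prop :=
  ∃ i, f a = some i ∧ v i (X a) < v i (X b)

/-- `f'` is obtained from `f` by eliminating (rotating along) one directed cycle of
the generalized envy graph `G(X, f)`: each agent on the cycle takes the bundle she
envies, other associations are unchanged. -/
def IsCycleRotation {G : Type*} {k n : ℕ} (v : Fin n → Finset G → ℝ)
    (X : Fin k → Finset G) (f f' : Fin k → Option (Fin n)) : Prop :=
  ∃ (c : List (Fin k)) (hc : c ≠ []),
    c.Nodup ∧
    c.Chain' (EnvyEdge v X f) ∧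
    EnvyEdge v X f (c.getLast hc) (c.head hc) ∧
    (∀ m, m ∉ c → f' m = f m) ∧
    (∀ (i : ℕ) (hi : i + 1 < c.length),
      f' (c.get ⟨i + 1, hi⟩) = f (c.get ⟨i, Nat.lt_of_succ_lt hi⟩)) ∧
    f' (c.head hc) = f (c.getLast hc)

/-- Potential function: total value of associated agents for their bundles. -/
noncomputable def Phi {G : Type*} {k n : ℕ} (v : Fin n → Finset G → ℝ)
    (X : Fin k → Finset G) (f : Fin k → Option (Fin n)) : ℝ :=
  ∑ a : Fin k, ((f a).elim 0 fun i => v i (X a))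

theorem Phi_lt_of_rotation {G : Type*} {k n : ℕ} (v : Fin n → Finset G → ℝ)
    (X : Fin k → Finset G) {f f' : Fin k → Option (Fin n)}
    (h : IsCycleRotation v X f f') : Phi v X f < Phi v X f' := by
  obtain ⟨c, hc, hnd, hchain, hcyc, hout, hstep, hhead⟩ := h
  set t : (Fin k → Option (Fin n)) → Fin k → ℝ :=
    fun g a => (g a).elim 0 fun i => v i (X a) with ht
  have hL : 0 < c.length := List.length_pos_iff.2 hc
  -- the shift map on indices
  set e : Fin c.length → Fin c.length :=
    fun j => ⟨(j.1 + 1) % c.length, Nat.mod_lt _ hL⟩ with he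
  have hmod : ∀ x : Fin c.length, (x.1 + 1) % c.length = x.1 + 1 ∨
      ((x.1 + 1) % c.length = 0 ∧ x.1 + 1 = c.length) := by
    intro x
    rcases Nat.lt_or_ge (x.1 + 1) c.length with h1 | h1
    · exact Or.inl (Nat.mod_eq_of_lt h1)
    · have hx := x.2
      have : x.1 + 1 = c.length := by omega
      exact Or.inr ⟨by simp [this], this⟩
  have hebij : Function.Bijective e := by
    refine Finite.injective_iff_bijective.1 ?_
    intro a b hab
    have hv : (a.1 + 1) % c.length = (b.1 + 1) % c.length := congrArg Fin.val hab
    have ha2 := a.2; have hb2 := b.2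
    apply Fin.ext
    rcases hmod a with h1 | ⟨h1, h1'⟩ <;> rcases hmod b with h2 | ⟨h2, h2'⟩ <;> omega
  -- key pointwise strict inequality
  have key : ∀ j : Fin c.length, t f (c.get j) < t f' (c.get (e j)) := by
    intro j
    rcases Nat.lt_or_ge (j.1 + 1) c.length with h1 | h1
    · have hej : e j = ⟨j.1 + 1, h1⟩ := Fin.ext (Nat.mod_eq_of_lt h1)
      have hedge : EnvyEdge v X f (c.get j) (c.get ⟨j.1 + 1, h1⟩) :=
        List.isChain_iff_getElem.1 hchain j.1 (by omega)
      have hst : f' (c.get ⟨j.1 + 1, h1⟩) = f (c.get j) := hstep j.1 h1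
      obtain ⟨i, hfi, hlt⟩ := hedge
      rw [hej]
      simp only [ht, hst, hfi, Option.elim]
      exact hlt
    · have hj1 : j.1 + 1 = c.length := by omega
      have hej : e j = ⟨0, hL⟩ := Fin.ext (by simp [he, hj1, Nat.mod_self])
      have hlast : c.get j = c.getLast hc := by
        have hj' : j = ⟨c.length - 1, by omega⟩ := Fin.ext (show j.1 = c.length - 1 by omega)
        rw [hj']
        simp [List.getLast_eq_getElem]
      have hhd : c.get ⟨0, hL⟩ = c.head hc := by
        cases c with
        | nil => exact absurd rfl hc
        | cons a l => rfl
      obtain ⟨i, hfi, hlt⟩ := hcyc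
      rw [hej, hhd, hlast]
      simp only [ht, hhead, hfi, Option.elim]
      exact hlt
  -- sums over the cycle
  have hinj : Function.Injective c.get := List.nodup_iff_injective_get.1 hnd
  have himg : Finset.image c.get Finset.univ = c.toFinset := by
    ext a; simp [List.mem_iff_get, eq_comm]
  have hsum : ∀ g : Fin k → Option (Fin n),
      ∑ a ∈ c.toFinset, t g a = ∑ j : Fin c.length, t g (c.get j) := by
    intro g
    rw [← himg, Finset.sum_image (fun x _ y _ h => hinj h)]
  have hlt : ∑ a ∈ c.toFinset, t f a < ∑ a ∈ c.toFinset, t f' a := by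
    rw [hsum, hsum]
    calc ∑ j : Fin c.length, t f (c.get j)
        < ∑ j : Fin c.length, t f' (c.get (e j)) := by
          refine Finset.sum_lt_sum_of_nonempty ?_ fun j _ => key j
          exact Finset.univ_nonempty_iff.2 ⟨⟨0, hL⟩⟩
      _ = ∑ j : Fin c.length, t f' (c.get j) :=
          Fintype.sum_bijective e hebij (fun x => t f' (c.get (e x)))
            (fun j => t f' (c.get j)) (fun _ => rfl)
  have heq : ∑ a ∈ c.toFinsetᶜ, t f a = ∑ a ∈ c.toFinsetᶜ, t f' a := by
    refine Finset.sum_congr rfl fun a ha => ?_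
    have : a ∉ c := by simpa using ha
    simp [ht, hout a this]
  have hdecomp : ∀ g : Fin k → Option (Fin n),
      Phi v X g = ∑ a ∈ c.toFinset, t g a + ∑ a ∈ c.toFinsetᶜ, t g a := by
    intro g
    rw [Finset.sum_add_sum_compl]
    rfl
  rw [hdecomp f, hdecomp f', heq]
  exact add_lt_add_left hlt _

/-- The envy-cycle elimination procedure terminates: there is no infinite sequence of
association functions in which each is obtained from the previous one by eliminating a
cycle of the generalized envy graph. -/
theorem cycle_elimination_terminates
    {G : Type*} {k n : ℕ} (v : Fin n → Finset G → ℝ) (X : Fin k → Finset G) :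
    ¬ ∃ F : ℕ → (Fin k → Option (Fin n)),
        ∀ t, IsCycleRotation v X (F t) (F (t + 1)) := by
  rintro ⟨F, hF⟩
  have hmono : StrictMono (fun t => Phi v X (F t)) :=
    strictMono_nat_of_lt_succ fun t => Phi_lt_of_rotation v X (hF t)
  obtain ⟨t₁, t₂, hne, heq⟩ := Finite.exists_ne_map_eq_of_infinite F
  exact hne (hmono.injective (by rw [heq]))
end

section
/- After eliminating an envy cycle in the generalized envy graph, if the association function f was MXS+EFL for the partition X before the rotation, it remains MXS+EFL after, and the sets D(f) of associated bundle indices and I(f) of associated agents are unchanged. -/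
open Finset

/-- Bundle `X b` is k-MXS-feasible for valuation `v` in a partition `X` of all goods. -/
def MXSfeasibleIn {G : Type*} [DecidableEq G] [Fintype G] {k : ℕ}
    (v : Finset G → ℝ) (X : Fin k → Finset G) (b : Fin k) : Prop :=
  ∃ Y : Fin k → Finset G, IsPartitionOn Finset.univ Y ∧
    EFXfeasibleIn v Y b ∧ v (Y b) ≤ v (X b)

/-- `f` is an MXS+EFL association function for `X`: every associated bundle is
MXS-feasible and EFL-feasible for its associated agent. -/
def IsMXSEFL {G : Type*} [DecidableEq G] [Fintype G] {k n : ℕ}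
    (v : Fin n → Finset G → ℝ) (X : Fin k → Finset G)
    (f : Fin k → Option (Fin n)) : Prop :=
  ∀ ℓ a, f ℓ = some a → MXSfeasibleIn (v a) X ℓ ∧ EFLfeasibleIn (v a) X ℓ

lemma mxs_mono {G : Type*} [DecidableEq G] [Fintype G] {k : ℕ}
    (v : Finset G → ℝ) (X : Fin k → Finset G) (b b' : Fin k)
    (h : MXSfeasibleIn v X b) (hle : v (X b) ≤ v (X b')) :
    MXSfeasibleIn v X b' := by
  obtain ⟨Y, ⟨hdisj, hun⟩, hefx, hval⟩ := h
  refine ⟨Y ∘ Equiv.swap b' b, ⟨?_, ?_⟩, ?_, ?_⟩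
  · intro i j hij
    exact hdisj _ _ (fun hh => hij ((Equiv.swap b' b).injective hh))
  · ext g
    simp only [Finset.mem_biUnion, Finset.mem_univ, true_and, Function.comp] at *
    constructor
    · rintro ⟨i, hi⟩
      have : g ∈ Finset.univ.biUnion Y := by
        exact Finset.mem_biUnion.2 ⟨_, Finset.mem_univ _, hi⟩
      simp [hun] at this ⊢
    · intro _
      have : g ∈ Finset.univ.biUnion Y := by simp [hun]
      obtain ⟨i, _, hi⟩ := Finset.mem_biUnion.1 this
      exact ⟨(Equiv.swap b' b).symm i, by simpa using hi⟩
  · intro m g hg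
    simpa [Function.comp, Equiv.swap_apply_left] using hefx (Equiv.swap b' b m) g hg
  · simpa [Function.comp, Equiv.swap_apply_left] using le_trans hval hle

theorem cycle_elimination_preserves_mxs_efl
    {G : Type*} [DecidableEq G] [Fintype G] {k n : ℕ}
    (v : Fin n → Finset G → ℝ)
    (hmono : ∀ a, ∀ A B : Finset G, A ⊆ B → v a A ≤ v a B)
    (X : Fin k → Finset G) (hX : IsPartitionOn Finset.univ X)
    (f f' : Fin k → Option (Fin n))
    (hinj : ∀ ℓ z a, f ℓ = some a → f z = some a → ℓ = z)
    (hrot : IsCycleRotation v X f f')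
    (hfair : IsMXSEFL v X f) :
    IsMXSEFL v X f' ∧
    {ℓ : Fin k | f' ℓ ≠ none} = {ℓ : Fin k | f ℓ ≠ none} ∧
    {a : Fin n | ∃ ℓ, f' ℓ = some a} = {a : Fin n | ∃ ℓ, f ℓ = some a} := by
  obtain ⟨c, hc, hnd, hch, hcyc, hoff, hstep, hhead⟩ := hrot
  replace hch := List.isChain_iff_getElem.1 hch
  have hhead_get : c.head hc = c.get ⟨0, List.length_pos_iff.2 hc⟩ := by
    cases c with
    | nil => exact absurd rfl hc
    | cons x t => rfl
  have hlast_get : c.getLast hc =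
      c.get ⟨c.length - 1, by have := List.length_pos_iff.2 hc; omega⟩ := by
    simpa using List.getLast_eq_getElem hc
  -- every cycle element has an associated agent under f
  have hsomef : ∀ ℓ ∈ c, ∃ a, f ℓ = some a := by
    intro ℓ hℓ
    obtain ⟨⟨i, hi⟩, rfl⟩ := List.mem_iff_get.1 hℓ
    by_cases hi1 : i < c.length - 1
    · obtain ⟨a, ha, _⟩ := hch i (by omega)
      exact ⟨a, ha⟩
    · have : i = c.length - 1 := by omega
      subst this
      obtain ⟨a, ha, _⟩ := hcyc
      rw [hlast_get] at ha
      exact ⟨a, ha⟩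
  -- every cycle element's new bundle comes from a cycle element with a weakly worse bundle
  have hprev : ∀ ℓ ∈ c, ∃ p ∈ c, f' ℓ = f p ∧
      ∀ a, f p = some a → v a (X p) ≤ v a (X ℓ) := by
    intro ℓ hℓ
    obtain ⟨⟨i, hi⟩, rfl⟩ := List.mem_iff_get.1 hℓ
    rcases i with _ | j
    · refine ⟨c.getLast hc, List.getLast_mem hc, ?_, ?_⟩
      · exact hhead_get ▸ hhead
      · intro a ha
        obtain ⟨a', ha', hv⟩ := hcyc
        rw [ha] at ha'
        cases ha'
        exact le_of_lt (hhead_get ▸ hv)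
    · have hj : j < c.length - 1 := by omega
      refine ⟨c.get ⟨j, by omega⟩, List.get_mem c _, hstep j hi, ?_⟩
      intro a ha
      obtain ⟨a', ha', hv⟩ : EnvyEdge v X f (c.get ⟨j, by omega⟩) (c.get ⟨j + 1, hi⟩) :=
        hch j (by omega)
      rw [ha] at ha'
      cases ha'
      exact le_of_lt hv
  -- every cycle element's old agent is reassigned within the cycle
  have hnext : ∀ ℓ ∈ c, ∃ z ∈ c, f' z = f ℓ := by
    intro ℓ hℓ
    obtain ⟨⟨i, hi⟩, rfl⟩ := List.mem_iff_get.1 hℓ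
    by_cases hi1 : i + 1 < c.length
    · exact ⟨c.get ⟨i + 1, hi1⟩, List.get_mem c _, hstep i hi1⟩
    · have : i = c.length - 1 := by omega
      subst this
      exact ⟨c.head hc, List.head_mem hc, by rw [hhead, hlast_get]⟩
  refine ⟨?_, ?_, ?_⟩
  · intro ℓ a hfa
    by_cases hℓ : ℓ ∈ c
    · obtain ⟨p, hpc, hfp, hval⟩ := hprev ℓ hℓ
      rw [hfp] at hfa
      obtain ⟨hmxs, hefl⟩ := hfair p a hfa
      have hle := hval a hfa
      refine ⟨mxs_mono (v a) X p ℓ hmxs hle, ?_⟩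
      intro m
      rcases hefl m with h | ⟨g, hg, h1, h2⟩
      · exact Or.inl h
      · exact Or.inr ⟨g, hg, le_trans h1 hle, le_trans h2 hle⟩
    · rw [hoff ℓ hℓ] at hfa
      exact hfair ℓ a hfa
  · ext ℓ
    by_cases hℓ : ℓ ∈ c
    · obtain ⟨p, hpc, hfp, _⟩ := hprev ℓ hℓ
      obtain ⟨a, ha⟩ := hsomef p hpc
      obtain ⟨b, hb⟩ := hsomef ℓ hℓ
      simp [hfp, ha, hb]
    · simp [hoff ℓ hℓ]
  · ext a
    simp only [Set.mem_setOf_eq]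
    constructor
    · rintro ⟨ℓ, hℓa⟩
      by_cases hℓ : ℓ ∈ c
      · obtain ⟨p, _, hfp, _⟩ := hprev ℓ hℓ
        exact ⟨p, by rw [← hfp]; exact hℓa⟩
      · exact ⟨ℓ, by rw [← hoff ℓ hℓ]; exact hℓa⟩
    · rintro ⟨ℓ, hℓa⟩
      by_cases hℓ : ℓ ∈ c
      · obtain ⟨z, _, hz⟩ := hnext ℓ hℓ
        exact ⟨z, by rw [hz]; exact hℓa⟩
      · exact ⟨ℓ, by rw [hoff ℓ hℓ]; exact hℓa⟩
end

section
/- Shifting along a subchain preserves MXS+EFL: if f is an MXS+EFL association function for partition X and c = (q_s,...,q_0) is a subchain of the envy graph G(X, f) (each agent f(q_{ℓ+1}) envies X_{q_ℓ} relative to X_{q_{ℓ+1}}), then the function f' obtained by setting f'(q_ℓ) = f(q_{ℓ+1}) for ℓ < s and f'(q_s) = 0 is also MXS+EFL for X; moreover D(f') = (D(f) ∪ {q_0}) \ {q_s}, I(f') ⊆ I(f), every agent in I(f') weakly gains value, and any source bundle of G(X, f) remains a source in G(X, f'). -/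
open Finset

/-- Shifting along a subchain `c = (q_s, …, q_0)` preserves MXS+EFL, frees bundle
`q_s` and associates `q_0`, weakly increases every associated agent's value, and
preserves sources. -/
theorem shift_subchain_properties
    {G : Type*} [DecidableEq G] [Fintype G] {k n s : ℕ}
    (v : Fin n → Finset G → ℝ)
    (hmono : ∀ a, ∀ A B : Finset G, A ⊆ B → v a A ≤ v a B)
    (X : Fin k → Finset G) (hX : IsPartitionOn Finset.univ X)
    (f f' : Fin k → Option (Fin n))
    (hinj : ∀ ℓ z a, f ℓ = some a → f z = some a → ℓ = z)
    (hfair : IsMXSEFL v X f)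
    (q : Fin (s + 1) → Fin k) (hq : Function.Injective q)
    (hchain : ∀ ℓ : Fin s, EnvyEdge v X f (q ℓ.succ) (q ℓ.castSucc))
    (hf'1 : ∀ ℓ : Fin s, f' (q ℓ.castSucc) = f (q ℓ.succ))
    (hf'2 : f' (q (Fin.last s)) = none)
    (hf'3 : ∀ m, (∀ ℓ, q ℓ ≠ m) → f' m = f m) :
    IsMXSEFL v X f' ∧
    {ℓ : Fin k | f' ℓ ≠ none} =
      ({ℓ : Fin k | f ℓ ≠ none} ∪ {q 0}) \ {q (Fin.last s)} ∧
    {a : Fin n | ∃ ℓ, f' ℓ = some a} ⊆ {a : Fin n | ∃ ℓ, f ℓ = some a} ∧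
    (∀ (a : Fin n) (m m' : Fin k), f m = some a → f' m' = some a →
      v a (X m) ≤ v a (X m')) ∧
    (∀ r : Fin k, (∀ ℓ, ¬ EnvyEdge v X f ℓ r) → ∀ ℓ, ¬ EnvyEdge v X f' ℓ r) := by

  classical
  have hcases : ∀ m : Fin k, (∀ ℓ, q ℓ ≠ m) ∨ ∃ i, q i = m := by
    intro m
    by_cases h : ∃ i, q i = m
    · exact Or.inr h
    · exact Or.inl fun ℓ hℓ => h ⟨ℓ, hℓ⟩
  have key : ∀ (m : Fin k) (a : Fin n), f' m = some a →
      (f m = some a ∧ ∀ ℓ, q ℓ ≠ m) ∨ ∃ j : Fin s, m = q j.castSucc ∧ f (q j.succ) = some a := by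
    intro m a hma
    rcases hcases m with h | ⟨i, hi⟩
    · exact Or.inl ⟨(hf'3 m h) ▸ hma, h⟩
    · rcases eq_or_ne i (Fin.last s) with rfl | hne
      · rw [← hi, hf'2] at hma; exact absurd hma (by simp)
      · obtain ⟨j, rfl⟩ := Fin.exists_castSucc_eq.mpr hne
        subst hi
        rw [hf'1 j] at hma
        exact Or.inr ⟨j, rfl, hma⟩
  have upg : ∀ (a : Fin n) (b ℓ : Fin k), v a (X b) ≤ v a (X ℓ) →
      MXSfeasibleIn (v a) X b → EFLfeasibleIn (v a) X b →
      MXSfeasibleIn (v a) X ℓ ∧ EFLfeasibleIn (v a) X ℓ := by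
    rintro a b ℓ hle ⟨Y, hY, hEFX, hvY⟩ hEFL
    have e := Equiv.swap ℓ b
    refine ⟨⟨Y ∘ Equiv.swap ℓ b, ⟨fun i j hij => hY.1 _ _ (fun h => hij ((Equiv.swap ℓ b).injective h)), ?_⟩, fun m g hg => ?_, ?_⟩, fun m => ?_⟩
    · ext x
      simp only [Finset.mem_biUnion, Finset.mem_univ, true_and, Function.comp_apply]
      refine ⟨fun _ => trivial, fun _ => ?_⟩
      have hx : x ∈ Finset.univ.biUnion Y := by rw [hY.2]; exact Finset.mem_univ x
      obtain ⟨i, _, hi⟩ := Finset.mem_biUnion.mp hx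
      exact ⟨Equiv.swap ℓ b i, by simpa using hi⟩
    · have : (Equiv.swap ℓ b) ℓ = b := Equiv.swap_apply_left ℓ b
      simp only [Function.comp_apply, this]
      exact hEFX _ g hg
    · have : (Equiv.swap ℓ b) ℓ = b := Equiv.swap_apply_left ℓ b
      simp only [Function.comp_apply, this]
      exact hvY.trans hle
    rcases hEFL m with h | ⟨g, hg, h1, h2⟩
    · exact Or.inl h
    · exact Or.inr ⟨g, hg, h1.trans hle, h2.trans hle⟩
  refine ⟨?_, ?_, ?_, ?_, ?_⟩
  · -- IsMXSEFL v X f'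
    intro ℓ a hla
    rcases key ℓ a hla with ⟨hf, _⟩ | ⟨j, rfl, hf⟩
    · exact hfair ℓ a hf
    · obtain ⟨i, hfi, hlt⟩ := hchain j
      have hia : i = a := by rw [hfi] at hf; injection hf
      subst hia
      obtain ⟨h1, h2⟩ := hfair _ i hf
      exact upg i _ _ hlt.le h1 h2
  · -- set equality
    ext ℓ
    simp only [Set.mem_setOf_eq, Set.mem_diff, Set.mem_union, Set.mem_singleton_iff]
    constructor
    · intro h
      obtain ⟨a, ha⟩ := Option.ne_none_iff_exists'.mp h
      rcases key ℓ a ha with ⟨hf, hnot⟩ | ⟨j, rfl, hf⟩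
      · exact ⟨Or.inl (by simp [hf]), fun he => hnot (Fin.last s) he.symm⟩
      · constructor
        · by_cases h0 : j.castSucc = (0 : Fin (s + 1))
          · exact Or.inr (by rw [h0])
          · obtain ⟨j', hj'⟩ := Fin.eq_succ_of_ne_zero h0
            obtain ⟨i, hfi, _⟩ := hchain j'
            exact Or.inl (by rw [hj', hfi]; simp)
        · intro he
          exact absurd (hq he) (Fin.ne_last_of_lt (Fin.castSucc_lt_last j))
    · rintro ⟨h1, h2⟩
      rcases hcases ℓ with h | ⟨i, hi⟩
      · rw [hf'3 ℓ h]
        rcases h1 with h1 | rfl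
        · exact h1
        · exact absurd rfl (h 0)
      · have hne : i ≠ Fin.last s := by rintro rfl; exact h2 hi.symm
        obtain ⟨j, rfl⟩ := Fin.exists_castSucc_eq.mpr hne
        obtain ⟨a, ha, _⟩ := hchain j
        rw [← hi, hf'1 j, ha]
        simp
  · -- I(f') ⊆ I(f)
    rintro a ⟨ℓ, hla⟩
    rcases key ℓ a hla with ⟨hf, _⟩ | ⟨j, _, hf⟩
    · exact ⟨ℓ, hf⟩
    · exact ⟨q j.succ, hf⟩
  · -- weak value gain
    intro a m m' hm hm'
    rcases key m' a hm' with ⟨hf, _⟩ | ⟨j, rfl, hf⟩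
    · rw [hinj m m' a hm hf]
    · obtain ⟨i, hfi, hlt⟩ := hchain j
      have hia : i = a := by rw [hfi] at hf; injection hf
      subst hia
      rw [hinj m (q j.succ) i hm hf]
      exact hlt.le
  · -- sources preserved
    rintro r hr ℓ ⟨i, hℓi, hlt⟩
    rcases key ℓ i hℓi with ⟨hf, _⟩ | ⟨j, rfl, hf⟩
    · exact hr ℓ ⟨i, hf, hlt⟩
    · obtain ⟨i', hfi', hlt'⟩ := hchain j
      have : i' = i := by rw [hfi'] at hf; injection hf
      subst this
      exact hr (q j.succ) ⟨i', hf, hlt'.trans hlt⟩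
end
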